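/- Let φ^t be the flow on the closed unit ball B̄^k generated by the vector field s ↦ -(1-|s|²)∇E(s), where E: B̄^k → ℝ is C² with -(1/c)Id ≤ D²E ≤ -c·Id and unique maximum m with |m| ≤ c/√10. Then for every κ ∈ (0, 1/4) there exists T > 0 such that for all v ∈ B̄^k with |v - m| ≥ κ, E(φ^T(v)) < E(0) - c/10. -/

import Mathlib

open Metric InnerProductSpace Topology

lemma aux_decay (f f' : ℝ → ℝ) (a b r : ℝ) (hab : a ≤ b)
    (hf : ∀ t, HasDerivAt f (f' t) t)
    (hbd : ∀ t ∈ Set.Icc a b, f' t ≤ -r) : f b + r * (b - a) ≤ f a := by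
  have hg : ∀ t, HasDerivAt (fun t => f t + r * t) (f' t + r) t := by
    intro t
    have h := (hf t).add ((hasDerivAt_id t).const_mul r)
    rw [mul_one] at h
    exact h
  have hA : AntitoneOn (fun t => f t + r * t) (Set.Icc a b) := by
    apply antitoneOn_of_deriv_nonpos (convex_Icc a b)
    · exact fun t _ => (hg t).continuousAt.continuousWithinAt
    · exact fun t _ => (hg t).differentiableAt.differentiableWithinAt
    · intro t ht
      rw [interior_Icc] at ht
      rw [(hg t).deriv]
      have := hbd t ⟨ht.1.le, ht.2.le⟩
      linarith
  have := hA (Set.left_mem_Icc.2 hab) (Set.right_mem_Icc.2 hab) hab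
  simp only at this
  linarith

/-- Second-derivative upper bound gives Taylor-type upper bounds. -/
lemma aux_real (f f' f'' : ℝ → ℝ) (a : ℝ)
    (hf : ∀ t, HasDerivAt f (f' t) t) (hf' : ∀ t, HasDerivAt f' (f'' t) t)
    (hbd : ∀ t ∈ Set.Icc (0:ℝ) 1, f'' t ≤ a) :
    f' 1 ≤ f' 0 + a ∧ f 1 ≤ f 0 + f' 0 + a / 2 := by
  have key : ∀ t ∈ Set.Icc (0:ℝ) 1, f' t ≤ f' 0 + a * t := by
    intro t ht
    have := aux_decay f' f'' 0 t (-a) ht.1 hf'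
      (fun u hu => by simpa using hbd u ⟨hu.1, hu.2.trans ht.2⟩)
    nlinarith [this]
  constructor
  · have := key 1 (by norm_num); linarith
  · set F : ℝ → ℝ := fun t => f t - f' 0 * t - a / 2 * t ^ 2 with hF
    have hFd : ∀ t, HasDerivAt F (f' t - f' 0 - a * t) t := by
      intro t
      have h1 : HasDerivAt (fun t : ℝ => f' 0 * t) (f' 0) t := by
        simpa using (hasDerivAt_id t).const_mul (f' 0)
      have h2 : HasDerivAt (fun t : ℝ => a / 2 * t ^ 2) (a * t) t := by
        have := (hasDerivAt_pow 2 t).const_mul (a / 2)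
        exact this.congr_deriv (by ring)
      exact ((hf t).sub h1).sub h2
    have := aux_decay F (fun t => f' t - f' 0 - a * t) 0 1 0 zero_le_one hFd
      (fun t ht => by have := key t ht; simp; linarith)
    simp only [hF] at this
    nlinarith [this]
lemma aux_fderiv_eq {k : ℕ} (E : EuclideanSpace ℝ (Fin k) → ℝ)
    (z u : EuclideanSpace ℝ (Fin k)) :
    fderiv ℝ E z u = @inner ℝ _ _ (gradient E z) u := by
  have : fderiv ℝ E z = toDual ℝ _ (gradient E z) :=
    ((toDual ℝ (EuclideanSpace ℝ (Fin k))).apply_symm_apply (fderiv ℝ E z)).symm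
  rw [this, toDual_apply_apply]

lemma aux_line {k : ℕ} {E : EuclideanSpace ℝ (Fin k) → ℝ} (hE : ContDiff ℝ 2 E)
    (x u : EuclideanSpace ℝ (Fin k)) (t : ℝ) :
    HasDerivAt (fun s : ℝ => E (x + s • u))
      (@inner ℝ _ _ (gradient E (x + t • u)) u) t ∧
    HasDerivAt (fun s : ℝ => (@inner ℝ _ _ (gradient E (x + s • u)) u))
      (iteratedFDeriv ℝ 2 E (x + t • u) ![u, u]) t := by
  have hEd : Differentiable ℝ E := hE.differentiable two_ne_zero
  have hline : HasDerivAt (fun s : ℝ => x + s • u) u t := by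
    simpa using ((hasDerivAt_id t).smul_const u).const_add x
  constructor
  · have := (hEd (x + t • u)).hasFDerivAt.comp_hasDerivAt t hline
    rwa [aux_fderiv_eq] at this
  · have hEd1 : Differentiable ℝ (fderiv ℝ E) :=
      (hE.fderiv_right (m := 1) (by norm_num)).differentiable one_ne_zero
    have hA : HasDerivAt (fun s : ℝ => fderiv ℝ E (x + s • u))
        (fderiv ℝ (fderiv ℝ E) (x + t • u) u) t :=
      (hEd1 (x + t • u)).hasFDerivAt.comp_hasDerivAt t hline
    have hB := hA.clm_apply (hasDerivAt_const t u)
    simp only [map_zero, add_zero] at hB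
    have heq : (fun s : ℝ => fderiv ℝ E (x + s • u) u)
        = fun s : ℝ => (@inner ℝ _ _ (gradient E (x + s • u)) u) := by
      funext s; exact aux_fderiv_eq E _ u
    rw [heq] at hB
    have h2 : iteratedFDeriv ℝ 2 E (x + t • u) ![u, u]
        = fderiv ℝ (fderiv ℝ E) (x + t • u) u u := by
      rw [iteratedFDeriv_two_apply]; simp
    rwa [h2]

lemma aux_conc {k : ℕ} {E : EuclideanSpace ℝ (Fin k) → ℝ} (hE : ContDiff ℝ 2 E)
    {c : ℝ} (hc0 : 0 < c)
    (hhess : ∀ s ∈ closedBall (0 : EuclideanSpace ℝ (Fin k)) 1,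
      ∀ v : EuclideanSpace ℝ (Fin k),
        -(1 / c) * ‖v‖ ^ 2 ≤ iteratedFDeriv ℝ 2 E s ![v, v] ∧
        iteratedFDeriv ℝ 2 E s ![v, v] ≤ -c * ‖v‖ ^ 2)
    {m : EuclideanSpace ℝ (Fin k)}
    (hm : m ∈ closedBall (0 : EuclideanSpace ℝ (Fin k)) 1)
    (hgm : gradient E m = 0)
    {s : EuclideanSpace ℝ (Fin k)}
    (hs : s ∈ closedBall (0 : EuclideanSpace ℝ (Fin k)) 1) :
    E s ≤ E m - c / 2 * ‖s - m‖ ^ 2 ∧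
    E m - 1 / (2 * c) * ‖s - m‖ ^ 2 ≤ E s ∧
    (@inner ℝ _ _ (gradient E s) (s - m)) ≤ -c * ‖s - m‖ ^ 2 := by
  set u := s - m with hu
  have hmem : ∀ t ∈ Set.Icc (0:ℝ) 1, m + t • u ∈
      closedBall (0 : EuclideanSpace ℝ (Fin k)) 1 := by
    intro t ht
    have := (convex_closedBall (0 : EuclideanSpace ℝ (Fin k)) 1) hm hs
      (by linarith [ht.1, ht.2] : (0:ℝ) ≤ 1 - t) ht.1 (by ring)
    convert this using 1
    simp only [hu]
    module
  have hg := fun t => (aux_line hE m u t).1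
  have hp := fun t => (aux_line hE m u t).2
  have p0 : (@inner ℝ _ _ (gradient E (m + (0:ℝ) • u)) u) = 0 := by
    simp [hgm]
  have hms : m + u = s := by simp [hu]
  have hupper := aux_real (fun t => E (m + t • u))
      (fun t => (@inner ℝ _ _ (gradient E (m + t • u)) u))
      (fun t => iteratedFDeriv ℝ 2 E (m + t • u) ![u, u]) (-c * ‖u‖ ^ 2)
      hg hp (fun t ht => (hhess _ (hmem t ht) u).2)
  have hlower := aux_real (fun t => -(E (m + t • u)))
      (fun t => -(@inner ℝ _ _ (gradient E (m + t • u)) u))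
      (fun t => -(iteratedFDeriv ℝ 2 E (m + t • u) ![u, u])) (1 / c * ‖u‖ ^ 2)
      (fun t => (hg t).neg) (fun t => (hp t).neg)
      (fun t ht => by have := (hhess _ (hmem t ht) u).1; linarith)
  simp only [one_smul, zero_smul, add_zero, hms, hgm, inner_zero_left] at hupper hlower
  refine ⟨by linarith [hupper.2], ?_, by linarith [hupper.1]⟩
  have h : 1 / (2 * c) * ‖u‖ ^ 2 = 1 / c * ‖u‖ ^ 2 / 2 := by ring
  linarith [hlower.2]


set_option maxHeartbeats 2000000 in
/-- Let `φ` be the flow on the closed unit ball `B̄^k` generated by the vector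
field `s ↦ -(1-|s|²)∇E(s)`, where `E` is `C²` with `-(1/c)Id ≤ D²E ≤ -c·Id`
(`0 < c < 1`) and unique maximum `m` with `|m| ≤ c/√10`. Then for every
`κ ∈ (0, 1/4)` there is `T > 0` such that `E(φ_T(v)) < E(0) - c/10` for all
`v ∈ B̄^k` with `|v - m| ≥ κ`. -/
theorem stmt_19 {k : ℕ} (hk : 1 ≤ k) (E : EuclideanSpace ℝ (Fin k) → ℝ)
    (c : ℝ) (hc0 : 0 < c) (hc1 : c < 1) (hE : ContDiff ℝ 2 E)
    (hhess : ∀ s ∈ closedBall (0 : EuclideanSpace ℝ (Fin k)) 1,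
      ∀ v : EuclideanSpace ℝ (Fin k),
        -(1 / c) * ‖v‖ ^ 2 ≤ iteratedFDeriv ℝ 2 E s ![v, v] ∧
        iteratedFDeriv ℝ 2 E s ![v, v] ≤ -c * ‖v‖ ^ 2)
    (m : EuclideanSpace ℝ (Fin k))
    (hm : m ∈ closedBall (0 : EuclideanSpace ℝ (Fin k)) 1)
    (hmax : IsMaxOn E (closedBall 0 1) m)
    (hmuniq : ∀ m' ∈ closedBall (0 : EuclideanSpace ℝ (Fin k)) 1,
      IsMaxOn E (closedBall 0 1) m' → m' = m)
    (hmn : ‖m‖ ≤ c / Real.sqrt 10)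
    (φ : ℝ → EuclideanSpace ℝ (Fin k) → EuclideanSpace ℝ (Fin k))
    (hφ0 : ∀ v, φ 0 v = v)
    (hφode : ∀ (v : EuclideanSpace ℝ (Fin k)) (t : ℝ),
      HasDerivAt (fun s => φ s v) (-((1 - ‖φ t v‖ ^ 2) • gradient E (φ t v))) t)
    (hφball : ∀ t ≥ (0 : ℝ), ∀ v ∈ closedBall (0 : EuclideanSpace ℝ (Fin k)) 1,
      φ t v ∈ closedBall (0 : EuclideanSpace ℝ (Fin k)) 1) :
    ∀ κ : ℝ, 0 < κ → κ < 1 / 4 →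
      ∃ T > (0 : ℝ), ∀ v ∈ closedBall (0 : EuclideanSpace ℝ (Fin k)) 1,
        κ ≤ ‖v - m‖ → E (φ T v) < E 0 - c / 10 := by

  intro κ hκ0 hκ4
  -- basic numeric facts about √10
  have hsq10 : (3.16227 : ℝ) ≤ Real.sqrt 10 := by
    have : (3.16227 : ℝ) = Real.sqrt (3.16227 ^ 2) := (Real.sqrt_sq (by norm_num)).symm
    rw [this]
    exact Real.sqrt_le_sqrt (by norm_num)
  have hsq10' : Real.sqrt 10 ^ 2 = 10 := Real.sq_sqrt (by norm_num)
  have hsq10pos : (0 : ℝ) < Real.sqrt 10 := by linarith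
  -- the gradient vanishes at m
  have hmnorm : ‖m‖ ≤ c / 3.16227 := by
    refine hmn.trans ?_
    exact div_le_div_of_nonneg_left hc0.le (by norm_num) hsq10
  have hmlt : m ∈ ball (0 : EuclideanSpace ℝ (Fin k)) 1 := by
    rw [mem_ball, dist_zero_right]
    have h1 : c / 3.16227 < 1 := by
      rw [div_lt_one (by norm_num)]; linarith
    linarith
  have hnhds : closedBall (0 : EuclideanSpace ℝ (Fin k)) 1 ∈ 𝓝 m :=
    mem_nhds_iff.2 ⟨ball 0 1, ball_subset_closedBall, isOpen_ball, hmlt⟩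
  have hlm : IsLocalMax E m := hmax.filter_mono (Filter.le_principal_iff.mpr hnhds)
  have hgm : gradient E m = 0 := by
    rw [gradient, hlm.fderiv_eq_zero, map_zero]
  have conc := fun s hs => aux_conc hE hc0 hhess hm hgm (s := s) hs
  -- E 0 is close to E m
  have hm2 : ‖m‖ ^ 2 ≤ c ^ 2 / 10 := by
    have h1 : ‖m‖ ^ 2 ≤ (c / Real.sqrt 10) ^ 2 := by
      have := norm_nonneg m; nlinarith
    rw [div_pow, hsq10'] at h1
    exact h1
  have hE0 : E m - c / 20 ≤ E 0 := by
    have h := (conc 0 (by simp)).2.1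
    rw [zero_sub, norm_neg] at h
    have h2 : 1 / (2 * c) * ‖m‖ ^ 2 ≤ c / 20 := by
      rw [div_mul_eq_mul_div, one_mul, div_le_div_iff₀ (by linarith) (by norm_num)]
      nlinarith [hm2]
    linarith
  -- the time
  set T : ℝ := 6 / (c ^ 3 * κ ^ 2) with hT
  have hTpos : 0 < T := by positivity
  refine ⟨T, hTpos, ?_⟩
  intro v hv hκv
  set f : ℝ → ℝ := fun t => E (φ t v) with hfdef
  set F' : ℝ → ℝ := fun t => -((1 - ‖φ t v‖ ^ 2) * ‖gradient E (φ t v)‖ ^ 2) with hF'def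
  have hf : ∀ t, HasDerivAt f (F' t) t := by
    intro t
    have h1 := ((hE.differentiable two_ne_zero) (φ t v)).hasFDerivAt.comp_hasDerivAt t (hφode v t)
    have h2 : fderiv ℝ E (φ t v) (-((1 - ‖φ t v‖ ^ 2) • gradient E (φ t v))) = F' t := by
      rw [aux_fderiv_eq, inner_neg_right, real_inner_smul_right, real_inner_self_eq_norm_sq]
    rwa [h2] at h1
  have hball : ∀ t, 0 ≤ t → ‖φ t v‖ ≤ 1 := by
    intro t ht
    have := hφball t ht v hv
    rwa [mem_closedBall, dist_zero_right] at this
  have hF'0 : ∀ t, 0 ≤ t → F' t ≤ 0 := by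
    intro t ht
    have h1 := hball t ht
    have h2 : (0:ℝ) ≤ ‖φ t v‖ := norm_nonneg _
    have h3 : (0:ℝ) ≤ ‖gradient E (φ t v)‖ ^ 2 := sq_nonneg _
    have h4 : (0:ℝ) ≤ (1 - ‖φ t v‖ ^ 2) * ‖gradient E (φ t v)‖ ^ 2 :=
      mul_nonneg (by nlinarith) h3
    simp only [hF'def]
    linarith
  have hmono : ∀ t ∈ Set.Icc (0:ℝ) T, f T ≤ f t ∧ f t ≤ f 0 := by
    intro t ht
    constructor
    · have := aux_decay f F' t T 0 ht.2 hf
        (fun u hu => by simpa using hF'0 u (le_trans ht.1 hu.1))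
      simpa using this
    · have := aux_decay f F' 0 t 0 ht.1 hf
        (fun u hu => by simpa using hF'0 u hu.1)
      simpa using this
  have hf0 : f 0 = E v := by simp [hfdef, hφ0]
  have hEvm : E v ≤ E m := hmax hv
  have hEv : E v ≤ E m - c / 2 * κ ^ 2 := by
    have h := (conc v hv).1
    have h1 : κ ^ 2 ≤ ‖v - m‖ ^ 2 := pow_le_pow_left₀ hκ0.le hκv 2
    have h2 : c / 2 * κ ^ 2 ≤ c / 2 * ‖v - m‖ ^ 2 :=
      mul_le_mul_of_nonneg_left h1 (by positivity)
    linarith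
  by_contra hcon
  push_neg at hcon
  have hfT : E m - c / 6 < f T := by
    simp only [hfdef]
    linarith
  -- the decay rate estimate
  have hrate : ∀ t ∈ Set.Icc (0:ℝ) T, F' t ≤ -(1 / 5 * (c ^ 4 * κ ^ 2)) := by
    intro t ht
    have hsball := hφball t ht.1 v hv
    obtain ⟨hA, hB, hC⟩ := conc (φ t v) hsball
    have hft := hmono t ht
    have hEs_ge : E m - c / 6 < E (φ t v) := lt_of_lt_of_le hfT hft.1
    have hEs_le : E (φ t v) ≤ E v := by
      have h := hft.2; rwa [hf0] at h
    have h1s : ‖φ t v‖ ≤ 1 := hball t ht.1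
    simp only [hF'def]
    set s : EuclideanSpace ℝ (Fin k) := φ t v with hsdef
    clear_value s
    clear hsball hsdef
    set d : ℝ := ‖s - m‖ with hddef
    clear_value d
    have hd0 : 0 ≤ d := hddef ▸ norm_nonneg _
    have hdn : ‖s - m‖ = d := hddef.symm
    -- lower bound on d
    have hd2 : (c * κ) ^ 2 ≤ d ^ 2 := by
      have h5 : c / 2 * κ ^ 2 ≤ 1 / (2 * c) * d ^ 2 := by linarith
      have h6 := mul_le_mul_of_nonneg_left h5 (by positivity : (0:ℝ) ≤ 2 * c)
      have h7 : 2 * c * (1 / (2 * c) * d ^ 2) = d ^ 2 := by field_simp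
      have h8 : 2 * c * (c / 2 * κ ^ 2) = (c * κ) ^ 2 := by ring
      linarith
    have hd_ge : c * κ ≤ d := by
      have := Real.sqrt_le_sqrt hd2
      rwa [Real.sqrt_sq (by positivity), Real.sqrt_sq hd0] at this
    have hdpos : 0 < d := lt_of_lt_of_le (mul_pos hc0 hκ0) hd_ge
    -- upper bound on d
    have hd2' : d ^ 2 < 1 / 3 := by
      have h5 : c * d ^ 2 < c * (1 / 3) := by nlinarith
      exact (mul_lt_mul_iff_right₀ hc0).mp h5
    have hd_le : d ≤ 0.57736 := by nlinarith [sq_nonneg (d - 0.57736)]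
    -- gradient lower bound
    have h1 : c * d ^ 2 ≤ ‖gradient E s‖ * d := by
      have h2 : (@inner ℝ _ _ (gradient E s) (m - s)) ≤ ‖gradient E s‖ * ‖m - s‖ :=
        real_inner_le_norm _ _
      rw [norm_sub_rev, hdn] at h2
      have h3 : (@inner ℝ _ _ (gradient E s) (m - s))
          = -(@inner ℝ _ _ (gradient E s) (s - m)) := by
        rw [← inner_neg_right]; congr 1; abel
      rw [h3] at h2
      linarith
    have h1' : (c * d) * d ≤ ‖gradient E s‖ * d := by nlinarith
    have h2' : c * d ≤ ‖gradient E s‖ := le_of_mul_le_mul_right h1' hdpos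
    have hG : c ^ 2 * κ ≤ ‖gradient E s‖ := by
      have := mul_le_mul_of_nonneg_left hd_ge hc0.le
      nlinarith
    have hGs : c ^ 4 * κ ^ 2 ≤ ‖gradient E s‖ ^ 2 := by
      have := pow_le_pow_left₀ (by positivity : (0:ℝ) ≤ c ^ 2 * κ) hG 2
      nlinarith
    -- norm of s bound
    have hs_norm : ‖s‖ ^ 2 ≤ 4 / 5 := by
      have h1n : ‖s‖ ≤ ‖m‖ + d := by
        rw [← hdn]
        calc ‖s‖ = ‖m + (s - m)‖ := by congr 1; abel
          _ ≤ ‖m‖ + ‖s - m‖ := norm_add_le _ _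
      have h2n : ‖m‖ ≤ 0.31623 := by
        have h3 : c / 3.16227 ≤ 1 / 3.16227 :=
          (div_le_div_iff_of_pos_right (by norm_num)).mpr hc1.le
        have h4 : (1:ℝ) / 3.16227 ≤ 0.31623 := by norm_num
        linarith
      have h5 : ‖s‖ ≤ 0.89359 := by linarith
      have h6 := pow_le_pow_left₀ (norm_nonneg s) h5 2
      nlinarith
    have hfive : (1:ℝ)/5 ≤ 1 - ‖s‖ ^ 2 := by linarith
    have hprod : 1 / 5 * (c ^ 4 * κ ^ 2) ≤ (1 - ‖s‖ ^ 2) * ‖gradient E s‖ ^ 2 :=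
      mul_le_mul hfive hGs (by positivity) (by linarith)
    linarith
  have hfinal := aux_decay f F' 0 T (1 / 5 * (c ^ 4 * κ ^ 2)) hTpos.le hf hrate
  have hTval : 1 / 5 * (c ^ 4 * κ ^ 2) * (T - 0) = 6 / 5 * c := by
    rw [hT]
    field_simp
    ring
  rw [hTval, hf0] at hfinal
  linarith
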